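/- The channel invariants are preserved by a node execution step: if before the step the input channel ρ = xₙ_[tₙ] ∘ ... ∘ x₁_[t₁] satisfies t₁ ≤ t₂ ≤ ... ≤ tₙ ≤ t_ρ (validity time), the output channel σ satisfies its invariants with validity time t_σ ≥ t + p, and the node with period p and activation time t fires (consuming x₁ with t₁ ≤ t and appending a value with time-tag t + p to σ, updating σ's validity time to t + 2p and the node's activation time to t + p), then after the step both channels again satisfy the invariants: all element time-tags are ≤ the channel's validity time and elements are ordered by time-tags. -/

import Mathlib

/-- A MIMOS channel: a finite sequence of time-tagged values (newest leftmost,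
oldest rightmost) together with a validity time. -/
structure Channel (α : Type*) where
  elems : List (α × ℕ)   -- (value, time-tag), oldest element is the rightmost
  valid : ℕ              -- validity time of the channel

/-- Channel invariants: every element's time-tag is at most the validity time, and
elements are ordered by time-tags, oldest (smallest tag) rightmost. -/
def ChannelInv {α : Type*} (c : Channel α) : Prop :=
  (∀ e ∈ c.elems, e.2 ≤ c.valid) ∧
  List.Pairwise (· ≥ ·) (c.elems.map Prod.snd)

/-- the channel invariants are preserved by a node execution step.  If
the input channel `ρ` satisfies the invariants, its oldest element `(x₁, t₁)` has
`t₁ ≤ t`, the output channel `σ` satisfies the invariants and (maintained invariant)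
its validity time is at most `t + p` (the earliest possible tag of the next written
value), then after firing — removing the oldest input element, appending a value
with tag `t + p` to `σ`, and setting `σ`'s validity time to `t + 2p` — both channels
again satisfy the invariants. -/
theorem exec_step_preserves_invariants {α : Type*} (ρ σ : Channel α)
    (p t t₁ : ℕ) (x₁ v : α)
    (hp : 0 < p)
    (hρ : ChannelInv ρ) (hσ : ChannelInv σ)
    (holdest : ρ.elems.getLast? = some (x₁, t₁))
    (ht₁ : t₁ ≤ t)
    (hσvalid : σ.valid ≤ t + p) :
    ChannelInv ⟨ρ.elems.dropLast, ρ.valid⟩ ∧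
    ChannelInv ⟨(v, t + p) :: σ.elems, t + 2 * p⟩ := by
  obtain ⟨hρ1, hρ2⟩ := hρ
  obtain ⟨hσ1, hσ2⟩ := hσ
  refine ⟨⟨fun e he => hρ1 e (List.dropLast_sublist _ |>.mem he), ?_⟩,
    ⟨?_, ?_⟩⟩
  · have : (ρ.elems.dropLast.map Prod.snd).Sublist (ρ.elems.map Prod.snd) :=
      (List.dropLast_sublist _).map _
    exact hρ2.sublist this
  · intro e he
    show e.2 ≤ t + 2 * p
    rcases List.mem_cons.mp he with h | h
    · subst h; omega
    · have := hσ1 e h; omega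
  · refine List.pairwise_cons.mpr ⟨?_, hσ2⟩
    intro b hb
    simp only [List.mem_map] at hb
    obtain ⟨e, he, rfl⟩ := hb
    exact le_trans (hσ1 e he) hσvalid
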